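/- Let θ, θ̂, ε be real numbers with 0 ≤ θ, 0 ≤ θ̂ ≤ π − ε/2, |θ̂ − θ| ≤ ε, and 0 < ε ≤ 1. Then the error in the corresponding cosine estimates satisfies | cos(θ̂/2) − cos(θ/2) | ≤ | cos((θ̂ + ε)/2) − cos(θ̂/2) |. -/
import Mathlib


/-- Error bound for the expectation value recovered from an estimated phase: if
`|θ̂ - θ| ≤ ε` with `0 ≤ θ`, `0 ≤ θ̂ ≤ π - ε/2` and `0 < ε ≤ 1`, then
`|cos(θ̂/2) - cos(θ/2)| ≤ |cos((θ̂+ε)/2) - cos(θ̂/2)|`. -/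
theorem cosine_estimate_error (θ θhat ε : ℝ)
    (hθ : 0 ≤ θ) (hθhat0 : 0 ≤ θhat) (hθhatπ : θhat ≤ Real.pi - ε / 2)
    (hclose : |θhat - θ| ≤ ε) (hε0 : 0 < ε) (hε1 : ε ≤ 1) :
    |Real.cos (θhat / 2) - Real.cos (θ / 2)|
      ≤ |Real.cos ((θhat + ε) / 2) - Real.cos (θhat / 2)| := by
  have hπ := Real.pi_gt_three
  set a := θhat / 2 with ha
  set s := θ / 2 with hs
  set t := ε / 2 with ht
  have habs := abs_le.mp hclose
  have ha0 : 0 ≤ a := by positivity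
  have hs0 : 0 ≤ s := by positivity
  have ht0 : 0 < t := by positivity
  have haπ2 : a ≤ Real.pi / 2 := by simp only [ha]; linarith
  have hatπ : a + t ≤ Real.pi := by simp only [ha, ht]; linarith
  have hcosa0 : 0 ≤ Real.cos a :=
    Real.cos_nonneg_of_mem_Icc ⟨by linarith, haπ2⟩
  have key : (θhat + ε) / 2 = a + t := by ring
  rw [key]
  -- RHS is cos a - cos (a+t)
  have hR : Real.cos (a + t) ≤ Real.cos a :=
    Real.cos_le_cos_of_nonneg_of_le_pi ha0 hatπ (by linarith)
  have hRabs : |Real.cos (a + t) - Real.cos a| = Real.cos a - Real.cos (a + t) := by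
    rw [abs_sub_comm, abs_of_nonneg (by linarith)]
  rw [hRabs]
  rcases le_or_gt a s with hcase | hcase
  · -- s ≥ a : cos s between cos(a+t) and cos a
    have hsat : s ≤ a + t := by simp only [hs, ha, ht]; linarith
    have h1 : Real.cos s ≤ Real.cos a :=
      Real.cos_le_cos_of_nonneg_of_le_pi ha0 (by linarith) hcase
    have h2 : Real.cos (a + t) ≤ Real.cos s :=
      Real.cos_le_cos_of_nonneg_of_le_pi hs0 hatπ hsat
    rw [abs_of_nonneg (by linarith)]
    linarith
  · have hL : |Real.cos a - Real.cos s| = Real.cos s - Real.cos a := by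
      rw [abs_sub_comm, abs_of_nonneg]
      have := Real.cos_le_cos_of_nonneg_of_le_pi hs0 (by linarith) hcase.le
      linarith
    rw [hL]
    rcases le_or_gt t a with hta | hta
    · -- a - t ≥ 0 : cos s ≤ cos (a - t)
      have hsge : a - t ≤ s := by simp only [hs, ha, ht]; linarith
      have h1 : Real.cos s ≤ Real.cos (a - t) :=
        Real.cos_le_cos_of_nonneg_of_le_pi (by linarith) (by linarith) hsge
      have hsum : Real.cos (a - t) + Real.cos (a + t) = 2 * Real.cos a * Real.cos t := by
        rw [Real.cos_sub, Real.cos_add]; ring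
      have hct : Real.cos t ≤ 1 := Real.cos_le_one t
      nlinarith
    · -- a < t : use cos s ≤ 1 and 1 + cos(a+t) ≤ 2 cos a
      have h1 : Real.cos s ≤ 1 := Real.cos_le_one s
      have hc : Real.cos (a + t) = 2 * Real.cos ((a + t) / 2) ^ 2 - 1 := by
        have h := Real.cos_sq ((a + t) / 2)
        rw [show 2 * ((a + t) / 2) = a + t by ring] at h
        linarith
      have hmid0 : 0 ≤ Real.cos ((a + t) / 2) :=
        Real.cos_nonneg_of_mem_Icc ⟨by linarith, by linarith⟩
      have hmid : Real.cos ((a + t) / 2) ≤ Real.cos a :=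
        Real.cos_le_cos_of_nonneg_of_le_pi ha0 (by linarith) (by linarith)
      have hmid1 : Real.cos ((a + t) / 2) ≤ 1 := Real.cos_le_one _
      nlinarith
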